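/- For θ ∈ (0,π), the function H_1(θ) = exp(1 − cosθ/sinc(θ))/sinc(θ) satisfies H_1(θ) = exp(θ²/2 + V₁(θ)) where V₁(θ) = Σ_{n=2}^∞ (2 + 1/n)·ζ(2n)·(θ/π)^(2n). -/

import Mathlib

open Real Filter

/-- `sinc x = sin x / x` with `sinc 0 = 1`. -/
noncomputable def sinc (x : ℝ) : ℝ := if x = 0 then 1 else Real.sin x / x

/-- `ζ(n)` as a real number (for even integer arguments `ζ` is real). -/
noncomputable def zetaR (n : ℕ) : ℝ := (riemannZeta (n : ℂ)).re

lemma sinc_pos {t : ℝ} (h1 : 0 < t) (h2 : t < π) : 0 < _root_.sinc t := by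
  rw [_root_.sinc, if_neg h1.ne']
  exact div_pos (Real.sin_pos_of_pos_of_lt_pi h1 h2) h1

lemma hasSum_zetaR {k : ℕ} (hk : 1 ≤ k) :
    HasSum (fun j : ℕ => 1 / ((j : ℝ) + 1) ^ (2 * k)) (zetaR (2 * k)) := by
  have h2k : 1 < 2 * k := by omega
  have hz : riemannZeta (2 * k : ℕ) = ∑' n : ℕ, 1 / (n : ℂ) ^ (2 * k) :=
    zeta_nat_eq_tsum_of_gt_one h2k
  have hsum : Summable (fun n : ℕ => 1 / ((n : ℝ)) ^ (2 * k)) := by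
    apply Real.summable_one_div_nat_pow.mpr h2k
  have hre : zetaR (2 * k) = ∑' n : ℕ, 1 / ((n : ℝ)) ^ (2 * k) := by
    rw [zetaR, hz]
    rw [show (fun n : ℕ => 1 / (n : ℂ) ^ (2 * k)) = fun n : ℕ => ((1 / (n : ℝ) ^ (2 * k) : ℝ) : ℂ) by
      ext n; push_cast; ring]
    rw [← Complex.ofReal_tsum, Complex.ofReal_re]
  have h0 : HasSum (fun n : ℕ => 1 / ((n : ℝ)) ^ (2 * k)) (zetaR (2 * k)) := hre ▸ hsum.hasSum
  have h1 : HasSum (fun n : ℕ => 1 / (((n:ℕ) + 1 : ℕ) : ℝ) ^ (2 * k)) (zetaR (2 * k)) := by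
    refine (hasSum_nat_add_iff (f := fun n : ℕ => 1 / ((n : ℝ)) ^ (2 * k)) 1).mpr ?_
    convert h0 using 1
    · rfl
    simp [Finset.sum_range_one, zero_pow (by omega : 2 * k ≠ 0)]
  convert h1 using 2 with j
  push_cast; ring_nf


lemma factor_mem {t : ℝ} (ht : |t| < π) (j : ℕ) :
    0 < 1 - (t / π) ^ 2 / ((j : ℝ) + 1) ^ 2 ∧ (t / π) ^ 2 / ((j : ℝ) + 1) ^ 2 < 1 := by
  have hπ : (0:ℝ) < π := Real.pi_pos
  have hx : |t / π| < 1 := by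
    rw [abs_div, abs_of_pos hπ]; exact (div_lt_one hπ).mpr ht
  have hx2 : (t / π) ^ 2 < 1 := by
    have h' : (t/π)^2 = |t/π|^2 := (sq_abs _).symm
    nlinarith [abs_nonneg (t/π)]
  have hj : (1:ℝ) ≤ ((j : ℝ) + 1) ^ 2 := by
    nlinarith [Nat.cast_nonneg (α := ℝ) j]
  have hlt : (t / π) ^ 2 / ((j : ℝ) + 1) ^ 2 < 1 := by
    rw [div_lt_one (by positivity)]
    calc (t/π)^2 < 1 := hx2
    _ ≤ _ := hj
  exact ⟨by linarith, hlt⟩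

/-- Log of the Euler product: `∑ -log(1 - (t/π)²/(j+1)²) = -log (sinc t)`. -/
lemma hasSum_neg_log_sinc {t : ℝ} (h1 : 0 < t) (h2 : t < π) :
    HasSum (fun j : ℕ => -Real.log (1 - (t / π) ^ 2 / ((j : ℝ) + 1) ^ 2))
      (-Real.log (_root_.sinc t)) := by
  have hπ : (0:ℝ) < π := Real.pi_pos
  have ht : |t| < π := by rw [abs_of_pos h1]; exact h2
  have hsinc : 0 < _root_.sinc t := by
    rw [_root_.sinc, if_neg h1.ne']
    exact div_pos (Real.sin_pos_of_pos_of_lt_pi h1 h2) h1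
  -- partial products tend to sinc t
  set x := t / π with hx
  have hxt : π * x = t := by rw [hx]; field_simp
  have hprod : Tendsto (fun n : ℕ => ∏ j ∈ Finset.range n, ((1:ℝ) - x ^ 2 / ((j:ℝ)+1)^2))
      atTop (nhds (_root_.sinc t)) := by
    have h := Real.tendsto_euler_sin_prod x
    rw [hxt] at h
    have ht0 : t ≠ 0 := h1.ne'
    have : Tendsto (fun n : ℕ => (t * ∏ j ∈ Finset.range n, ((1:ℝ) - x^2/((j:ℝ)+1)^2)) / t)
        atTop (nhds (Real.sin t / t)) := by
      simpa [hxt] using (Real.tendsto_euler_sin_prod x).div_const t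
    rw [_root_.sinc, if_neg ht0]
    refine this.congr fun n => ?_
    rw [mul_comm, mul_div_assoc, div_self ht0, mul_one]
  -- take logs
  have hlog : Tendsto (fun n : ℕ => ∑ j ∈ Finset.range n, Real.log ((1:ℝ) - x^2/((j:ℝ)+1)^2))
      atTop (nhds (Real.log (_root_.sinc t))) := by
    have := (Real.continuousAt_log hsinc.ne').tendsto.comp hprod
    refine this.congr fun n => ?_
    rw [Function.comp_apply, Real.log_prod]
    intro j _
    exact (factor_mem ht j).1.ne'
  have hneg : Tendsto (fun n : ℕ => ∑ j ∈ Finset.range n, -Real.log ((1:ℝ) - x^2/((j:ℝ)+1)^2))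
      atTop (nhds (-Real.log (_root_.sinc t))) := by
    simpa [Finset.sum_neg_distrib] using hlog.neg
  refine (hasSum_iff_tendsto_nat_of_nonneg (fun j => ?_) _).mpr hneg
  have := (factor_mem ht j).1
  have hle : (1:ℝ) - x^2/((j:ℝ)+1)^2 ≤ 1 := by
    have : 0 ≤ x^2/((j:ℝ)+1)^2 := by positivity
    linarith
  simpa using Real.log_nonpos (by linarith) hle


lemma summable_inv_sq : Summable (fun j : ℕ => 1 / ((j : ℝ) + 1) ^ 2) := by
  simpa using (hasSum_zetaR (k := 1) le_rfl).summable

lemma cast_sq_ge (j : ℕ) : (1:ℝ) ≤ ((j:ℝ)+1)^2 := by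
  nlinarith [Nat.cast_nonneg (α := ℝ) j]

lemma hasSum_cot {θ : ℝ} (h1 : 0 < θ) (h2 : θ < π) :
    HasSum (fun j : ℕ => 2 * θ ^ 2 / (((j : ℝ) + 1) ^ 2 * π ^ 2 - θ ^ 2))
      (1 - Real.cos θ / _root_.sinc θ) := by
  have hπ : (0:ℝ) < π := Real.pi_pos
  set r : ℝ := (θ + π) / 2 with hr
  have hr1 : θ < r := by rw [hr]; linarith
  have hr2 : r < π := by rw [hr]; linarith
  have hr0 : 0 < r := by linarith
  have hrπ : r ^ 2 < π ^ 2 := by nlinarith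
  have hden : ∀ (j : ℕ) (t : ℝ), t ∈ Set.Ioo (-r) r →
      ((j:ℝ)+1)^2 * (π^2 - r^2) ≤ ((j:ℝ)+1)^2 * π^2 - t ^ 2 := by
    intro j t ht
    have ht2 : t ^ 2 ≤ r ^ 2 := by
      rw [← sq_abs t, ← sq_abs r]
      apply pow_le_pow_left₀ (abs_nonneg t)
      rw [abs_of_pos hr0, abs_le]; exact ⟨ht.1.le, ht.2.le⟩
    nlinarith [cast_sq_ge j, sq_nonneg r]
  have hdpos : ∀ j : ℕ, (0:ℝ) < ((j:ℝ)+1)^2 * (π^2 - r^2) := by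
    intro j
    have : (0:ℝ) < π^2 - r^2 := by linarith
    positivity
  have hdenpos : ∀ (j : ℕ) (t : ℝ), t ∈ Set.Ioo (-r) r →
      0 < ((j:ℝ)+1)^2 * π^2 - t ^ 2 := fun j t ht => lt_of_lt_of_le (hdpos j) (hden j t ht)
  have hcpos : ∀ j : ℕ, (0:ℝ) < ((j:ℝ)+1)^2 * π^2 := by intro j; positivity
  set g : ℕ → ℝ → ℝ := fun j t => Real.log (1 - t ^ 2 / (((j:ℝ)+1)^2 * π^2)) with hgdef
  set g' : ℕ → ℝ → ℝ := fun j t => -2 * t / (((j:ℝ)+1)^2 * π^2 - t ^ 2) with hg'def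
  set u : ℕ → ℝ := fun j => 2 * r / (((j:ℝ)+1)^2 * (π^2 - r^2)) with hu
  have hu_sum : Summable u := by
    have := summable_inv_sq.mul_left (2 * r / (π^2 - r^2))
    refine this.congr fun j => ?_
    rw [hu, div_mul_div_comm, mul_one, mul_comm (π^2 - r^2)]
  have hderiv : ∀ (j : ℕ) (t : ℝ), t ∈ Set.Ioo (-r) r → HasDerivAt (g j) (g' j t) t := by
    intro j t ht
    have hcj : (((j:ℝ)+1)^2 * π^2) ≠ 0 := (hcpos j).ne'
    have hdj : (((j:ℝ)+1)^2 * π^2 - t^2) ≠ 0 := (hdenpos j t ht).ne'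
    have h0 : 1 - t ^ 2 / (((j:ℝ)+1)^2 * π^2) = (((j:ℝ)+1)^2 * π^2 - t ^ 2) / (((j:ℝ)+1)^2 * π^2) := by
      field_simp
    have hne : 1 - t ^ 2 / (((j:ℝ)+1)^2 * π^2) ≠ 0 := by
      rw [h0]; exact (div_pos (hdenpos j t ht) (hcpos j)).ne'
    have hinner : HasDerivAt (fun t : ℝ => 1 - t ^ 2 / (((j:ℝ)+1)^2 * π^2))
        (-2 * t / (((j:ℝ)+1)^2 * π^2)) t := by
      have hp : HasDerivAt (fun t : ℝ => t ^ 2) (2 * t) t := by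
        simpa using hasDerivAt_pow 2 t
      have := (hp.div_const (((j:ℝ)+1)^2 * π^2)).const_sub 1
      convert this using 1; rfl; rfl; ring
    have := hinner.log hne
    convert this using 1
    rw [hg'def]
    field_simp
  have hbound : ∀ (j : ℕ) (t : ℝ), t ∈ Set.Ioo (-r) r → ‖g' j t‖ ≤ u j := by
    intro j t ht
    rw [hg'def, hu]
    have hd := hdenpos j t ht
    rw [norm_eq_abs, abs_div, abs_of_pos hd, div_le_div_iff₀ hd (hdpos j)]
    have h1' : |(-2 : ℝ) * t| ≤ 2 * r := by
      rw [abs_mul]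
      have habs : |t| ≤ r := by rw [abs_le]; exact ⟨ht.1.le, ht.2.le⟩
      have : |(-2:ℝ)| = 2 := by norm_num
      rw [this]; linarith
    calc |(-2:ℝ) * t| * (((j:ℝ)+1)^2 * (π^2 - r^2)) ≤ (2*r) * (((j:ℝ)+1)^2 * (π^2 - r^2)) :=
          mul_le_mul_of_nonneg_right h1' (hdpos j).le
      _ ≤ (2*r) * (((j:ℝ)+1)^2 * π^2 - t^2) :=
          mul_le_mul_of_nonneg_left (hden j t ht) (by positivity)
  have hg0 : Summable fun j => g j 0 := by
    refine summable_zero.congr fun j => ?_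
    rw [hgdef]; simp
  have hθmem : θ ∈ Set.Ioo (-r) r := ⟨by linarith, hr1⟩
  have hDsum : HasDerivAt (fun z => ∑' j, g j z) (∑' j, g' j θ) θ :=
    hasDerivAt_tsum_of_isPreconnected hu_sum isOpen_Ioo (convex_Ioo _ _).isPreconnected
      hderiv hbound (Set.mem_Ioo.mpr ⟨by linarith, by linarith⟩) hg0 hθmem
  -- the tsum agrees with log (sinc z) on Ioo 0 π
  have hEq : ∀ z ∈ Set.Ioo (0:ℝ) π, (∑' j, g j z) = Real.log (_root_.sinc z) := by
    intro z hz
    have h := (hasSum_neg_log_sinc hz.1 hz.2).neg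
    simp only [neg_neg] at h
    have h' : HasSum (fun j => g j z) (Real.log (_root_.sinc z)) := by
      convert h using 1
      · rfl
      funext j
      rw [hgdef]
      congr 2
      rw [div_pow, div_div, mul_comm]
    exact h'.tsum_eq
  have hsin : 0 < Real.sin θ := Real.sin_pos_of_pos_of_lt_pi h1 h2
  have hmemIoo : θ ∈ Set.Ioo (0:ℝ) π := ⟨h1, h2⟩
  have hnhds : Set.Ioo (0:ℝ) π ∈ nhds θ := isOpen_Ioo.mem_nhds hmemIoo
  -- derivative of log (sinc z) directly
  have hquot : HasDerivAt (fun z => Real.sin z / z)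
      ((Real.cos θ * θ - Real.sin θ * 1) / θ ^ 2) θ :=
    (Real.hasDerivAt_sin θ).div (hasDerivAt_id θ) h1.ne'
  have hlogd : HasDerivAt (fun z => Real.log (Real.sin z / z))
      (((Real.cos θ * θ - Real.sin θ * 1) / θ ^ 2) / (Real.sin θ / θ)) θ := by
    exact hquot.log (ne_of_gt (div_pos hsin h1))
  have hlog2 : HasDerivAt (fun z => Real.log (_root_.sinc z))
      (((Real.cos θ * θ - Real.sin θ * 1) / θ ^ 2) / (Real.sin θ / θ)) θ := by
    refine hlogd.congr_of_eventuallyEq ?_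
    filter_upwards [hnhds] with z hz
    rw [_root_.sinc, if_neg hz.1.ne']
  have hDsum' : HasDerivAt (fun z => Real.log (_root_.sinc z)) (∑' j, g' j θ) θ := by
    refine hDsum.congr_of_eventuallyEq ?_
    filter_upwards [hnhds] with z hz
    exact (hEq z hz).symm
  have hD : (∑' j, g' j θ) = ((Real.cos θ * θ - Real.sin θ * 1) / θ ^ 2) / (Real.sin θ / θ) :=
    hDsum'.unique hlog2
  have hsummg' : Summable fun j => g' j θ :=
    Summable.of_norm_bounded hu_sum (fun j => hbound j θ hθmem)
  have hS : HasSum (fun j => g' j θ)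
      (((Real.cos θ * θ - Real.sin θ * 1) / θ ^ 2) / (Real.sin θ / θ)) := by
    rw [← hD]; exact hsummg'.hasSum
  have hfinal := hS.mul_left (-θ)
  have hsincθ : _root_.sinc θ = Real.sin θ / θ := by rw [_root_.sinc, if_neg h1.ne']
  convert hfinal using 1
  · rfl
  · funext j
    rw [hg'def]
    have hdj : (((j:ℝ)+1)^2 * π^2 - θ^2) ≠ 0 := (hdenpos j θ hθmem).ne'
    field_simp
  · rw [hsincθ]
    field_simp
    ring

lemma swap_hasSum {F : ℕ → ℕ → ℝ} {l : ℕ → ℝ} {s : ℕ → ℝ} {L : ℝ}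
    (hpos : ∀ j n, 0 ≤ F j n)
    (hrow : ∀ j, HasSum (fun n => F j n) (l j))
    (hcol : ∀ n, HasSum (fun j => F j n) (s n))
    (htot : HasSum l L) :
    HasSum s L := by
  have hF : Summable (fun p : ℕ × ℕ => F p.1 p.2) :=
    (summable_prod_of_nonneg (fun p => hpos p.1 p.2)).mpr
      ⟨fun j => (hrow j).summable,
        htot.summable.congr fun j => ((hrow j).tsum_eq).symm⟩
  have h1 : HasSum (fun p : ℕ × ℕ => F p.1 p.2) (∑' p : ℕ × ℕ, F p.1 p.2) := hF.hasSum
  have h2 : HasSum l (∑' p : ℕ × ℕ, F p.1 p.2) := h1.prod_fiberwise hrow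
  have hLe : (∑' p : ℕ × ℕ, F p.1 p.2) = L := h2.unique htot
  rw [hLe] at h1
  have hswap : HasSum (fun p : ℕ × ℕ => F p.2 p.1) L :=
    ((Equiv.prodComm ℕ ℕ).hasSum_iff).mp h1
  exact hswap.prod_fiberwise hcol

/-- For `θ ∈ (0,π)`, `H_1(θ) = exp(1 − cos θ/sinc θ)/sinc θ = exp(θ²/2 + V₁(θ))` with
`V₁(θ) = Σ_{n≥2} (2+1/n)·ζ(2n)·(θ/π)^(2n)`. -/
theorem stmt18 (θ : ℝ) (hθ : θ ∈ Set.Ioo 0 π) :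
    ∃ V : ℝ,
      HasSum (fun n : ℕ =>
        (2 + 1 / ((n : ℝ) + 2)) * zetaR (2 * (n + 2)) * (θ / π) ^ (2 * (n + 2))) V ∧
      Real.exp (1 - Real.cos θ / _root_.sinc θ) / _root_.sinc θ = Real.exp (θ ^ 2 / 2 + V) := by
  obtain ⟨h1, h2⟩ := hθ
  have hπ : (0:ℝ) < π := Real.pi_pos
  have ht : |θ| < π := by rw [abs_of_pos h1]; exact h2
  set x : ℝ := θ / π with hx
  set a : ℕ → ℝ := fun j => x ^ 2 / ((j : ℝ) + 1) ^ 2 with ha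
  have ha01 : ∀ j, 0 ≤ a j ∧ a j < 1 := fun j =>
    ⟨by rw [ha]; positivity, (factor_mem ht j).2⟩
  -- Part A : HasSum (fun n => zetaR (2(n+1))/(n+1) * x^(2(n+1))) (-log (sinc θ))
  have hA : HasSum (fun n : ℕ => zetaR (2 * (n + 1)) / ((n : ℝ) + 1) * x ^ (2 * (n + 1)))
      (-Real.log (_root_.sinc θ)) := by
    refine swap_hasSum (F := fun j n => (a j) ^ (n + 1) / ((n : ℝ) + 1))
      (l := fun j => -Real.log (1 - a j)) ?_ ?_ ?_ (hasSum_neg_log_sinc h1 h2)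
    · intro j n
      have := (ha01 j).1
      positivity
    · intro j
      have : |a j| < 1 := by rw [abs_of_nonneg (ha01 j).1]; exact (ha01 j).2
      exact Real.hasSum_pow_div_log_of_abs_lt_one this
    · intro n
      have hz := (hasSum_zetaR (k := n + 1) (by omega)).mul_left
        (x ^ (2 * (n + 1)) / ((n : ℝ) + 1))
      have hval : x ^ (2 * (n + 1)) / ((n : ℝ) + 1) * zetaR (2 * (n + 1))
          = zetaR (2 * (n + 1)) / ((n : ℝ) + 1) * x ^ (2 * (n + 1)) := by ring
      rw [hval] at hz
      refine hz.congr_fun fun j => ?_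
      simp only [ha]
      rw [div_pow, ← pow_mul, ← pow_mul]
      have hn1 : ((n : ℝ) + 1) ≠ 0 := by positivity
      have hj1 : (((j : ℝ) + 1) ^ (2 * (n + 1))) ≠ 0 := by positivity
      field_simp
  -- Part B : HasSum (fun n => 2 * zetaR (2(n+1)) * x^(2(n+1))) (1 - cos θ / sinc θ)
  have hB : HasSum (fun n : ℕ => 2 * zetaR (2 * (n + 1)) * x ^ (2 * (n + 1)))
      (1 - Real.cos θ / _root_.sinc θ) := by
    refine swap_hasSum (F := fun j n => 2 * (a j) ^ (n + 1))
      (l := fun j => 2 * (a j / (1 - a j))) ?_ ?_ ?_ ?_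
    · intro j n
      have := (ha01 j).1
      positivity
    · intro j
      have hgeo := (hasSum_geometric_of_lt_one (ha01 j).1 (ha01 j).2).mul_left (2 * a j)
      have hne : (1 : ℝ) - a j ≠ 0 := by have := (ha01 j).2; linarith
      have hval : 2 * a j * (1 - a j)⁻¹ = 2 * (a j / (1 - a j)) := by
        rw [div_eq_mul_inv]; ring
      rw [hval] at hgeo
      refine hgeo.congr_fun fun n => ?_
      show 2 * a j ^ (n + 1) = 2 * a j * a j ^ n
      rw [pow_succ']
      ring
    · intro n
      have hz := (hasSum_zetaR (k := n + 1) (by omega)).mul_left (2 * x ^ (2 * (n + 1)))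
      have hval : 2 * x ^ (2 * (n + 1)) * zetaR (2 * (n + 1))
          = 2 * zetaR (2 * (n + 1)) * x ^ (2 * (n + 1)) := by ring
      rw [hval] at hz
      refine hz.congr_fun fun j => ?_
      simp only [ha]
      rw [div_pow, ← pow_mul, ← pow_mul]
      have hj1 : (((j : ℝ) + 1) ^ (2 * (n + 1))) ≠ 0 := by positivity
      field_simp
    · -- HasSum (fun j => 2 * (a j / (1 - a j))) (1 - cos θ / sinc θ)
      have hc := hasSum_cot h1 h2
      refine hc.congr_fun fun j => ?_
      have hne : (1:ℝ) - a j ≠ 0 := by have := (ha01 j).2; linarith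
      have hdj : (((j:ℝ)+1)^2 * π^2 - θ^2) ≠ 0 := by
        have hf := (factor_mem ht j).2
        have hj0 : (0:ℝ) < ((j:ℝ)+1)^2 := by positivity
        have : θ^2 < ((j:ℝ)+1)^2 * π^2 := by
          rw [div_lt_one hj0] at hf
          calc θ^2 = (θ/π)^2 * π^2 := by field_simp
          _ < ((j:ℝ)+1)^2 * π^2 := mul_lt_mul_of_pos_right hf (by positivity)
        linarith
      have key : a j / (1 - a j) = θ^2 / (((j:ℝ)+1)^2*π^2 - θ^2) := by
        rw [div_eq_div_iff hne hdj]
        simp only [ha, hx]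
        field_simp
      rw [key, mul_div_assoc']
  -- combine
  set S : ℝ := (1 - Real.cos θ / _root_.sinc θ) + (-Real.log (_root_.sinc θ)) with hS
  have hAB : HasSum (fun n : ℕ => (2 + 1 / ((n : ℝ) + 1)) * zetaR (2 * (n + 1)) * x ^ (2 * (n + 1))) S := by
    refine (hB.add hA).congr_fun fun n => ?_
    ring
  have hzeta2 : zetaR 2 = π ^ 2 / 6 := by
    rw [zetaR]
    rw [show ((2 : ℕ) : ℂ) = (2 : ℂ) by norm_num]
    rw [riemannZeta_two]
    rw [show ((π : ℂ) ^ 2 / 6) = (((π ^ 2 / 6 : ℝ)) : ℂ) by push_cast; ring]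
    rw [Complex.ofReal_re]
  have hterm0 : (3:ℝ) * zetaR 2 * x ^ 2 = θ ^ 2 / 2 := by
    rw [hzeta2, hx]
    field_simp
    ring
  have hsinc : 0 < _root_.sinc θ := by
    rw [_root_.sinc, if_neg h1.ne']
    exact div_pos (Real.sin_pos_of_pos_of_lt_pi h1 h2) h1
  refine ⟨S - θ ^ 2 / 2, ?_, ?_⟩
  · have hshift : HasSum
        (fun n : ℕ => (2 + 1 / (((n + 1 : ℕ) : ℝ) + 1)) * zetaR (2 * ((n + 1) + 1)) * x ^ (2 * ((n + 1) + 1)))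
        (S - θ ^ 2 / 2) := by
      refine (hasSum_nat_add_iff
        (f := fun n : ℕ => (2 + 1 / ((n : ℝ) + 1)) * zetaR (2 * (n + 1)) * x ^ (2 * (n + 1))) 1).mpr ?_
      have heq : S - θ ^ 2 / 2 + ∑ i ∈ Finset.range 1,
          (2 + 1 / ((i : ℝ) + 1)) * zetaR (2 * (i + 1)) * x ^ (2 * (i + 1)) = S := by
        rw [Finset.sum_range_one]
        norm_num
        linarith [hterm0]
      rw [heq]
      exact hAB
    refine hshift.congr_fun fun n => ?_
    rw [show n + 1 + 1 = n + 2 from rfl]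
    push_cast
    ring
  · have hlogeq : Real.exp (-Real.log (_root_.sinc θ)) = (_root_.sinc θ)⁻¹ := by
      rw [Real.exp_neg, Real.exp_log hsinc]
    rw [show θ ^ 2 / 2 + (S - θ ^ 2 / 2) = S by ring, hS, Real.exp_add, hlogeq,
      div_eq_mul_inv]
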